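/- arXiv:1202.5484 — 2 statements merged into one kernel-verified Lean document; each statement's English description precedes it below -/
import Mathlib

section
/- Let G be a finitely generated Abelian group, let S ⊆ G be a symmetric finite generating set, and let s ∈ S. If some quasi-algebraic line in Cay(G,S) of quasi-type π_G(s) is a geodesic line, then every quasi-algebraic line in Cay(G,S) of quasi-type π_G(s) is a geodesic line. -/
/-- The Cayley graph of an (additive) group `G` with respect to a subset `S`:
vertices are elements of `G`, and `g`, `h` are adjacent iff `h - g ∈ (S ∪ -S) \ {0}`. -/
def cayley {G : Type*} [AddCommGroup G] (S : Set G) : SimpleGraph G where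
  Adj g h := g ≠ h ∧ (h - g ∈ S ∨ g - h ∈ S)
  symm := ⟨fun _ _ hadj => ⟨hadj.1.symm, hadj.2.symm⟩⟩
  loopless := ⟨fun _ hadj => hadj.1 rfl⟩

/-- `p 0, p 1, …, p n` is a geodesic segment in `Γ`: a path whose length realizes
the distance between its endpoints. -/
def IsGeodesicSegment {V : Type*} (Γ : SimpleGraph V) (n : ℕ) (p : ℕ → V) : Prop :=
  (∀ i < n, Γ.Adj (p i) (p (i + 1))) ∧ Γ.dist (p 0) (p n) = n

/-- A geodesic line in `Γ`. -/
def IsGeodesicLine {V : Type*} (Γ : SimpleGraph V) (γ : ℤ → V) : Prop :=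
  ∀ j k : ℤ, Γ.dist (γ j) (γ k) = (j - k).natAbs

/-- A convex geodesic line: a geodesic line such that for all `n ≤ m` the only geodesic
segment from `γ n` to `γ m` is `(γ n, γ (n+1), …, γ m)`. -/
def IsConvexGeodesicLine {V : Type*} (Γ : SimpleGraph V) (γ : ℤ → V) : Prop :=
  IsGeodesicLine Γ γ ∧
    ∀ n m : ℤ, n ≤ m → ∀ (k : ℕ) (p : ℕ → V),
      IsGeodesicSegment Γ k p → p 0 = γ n → p k = γ m →
        ∀ j ≤ k, p j = γ (n + j)

/-- A quasi-convex geodesic line: a geodesic line such that geodesic segments joining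
points `c`-close to the line stay uniformly `C`-close to it (fellow-traveller style). -/
def IsQuasiConvexGeodesicLine {V : Type*} (Γ : SimpleGraph V) (γ : ℤ → V) : Prop :=
  IsGeodesicLine Γ γ ∧
    ∀ c : ℕ, ∃ C : ℕ, ∀ n m : ℤ, n ≤ m → ∀ x y : V,
      Γ.dist x (γ n) ≤ c → Γ.dist y (γ m) ≤ c →
        ∀ p : ℕ → V, IsGeodesicSegment Γ (Γ.dist x y) p →
          p 0 = x → p (Γ.dist x y) = y →
            ∀ j ≤ Γ.dist x y, Γ.dist (p j) (γ (n + j)) ≤ C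

/-- A quasi-algebraic line of quasi-type `t ∈ G/tors G` in `Cay(G,S)`: a ℤ-path in the
Cayley graph all of whose steps project to `t` in `G/tors G`. -/
def IsQuasiAlgebraicLine {G : Type*} [AddCommGroup G] (S : Set G)
    (t : G ⧸ AddCommGroup.torsion G) (γ : ℤ → G) : Prop :=
  (∀ n : ℤ, (cayley S).Adj (γ n) (γ (n + 1))) ∧
    ∀ n : ℤ, QuotientAddGroup.mk' (AddCommGroup.torsion G) (γ (n + 1) - γ n) = t

section Aux
variable {G : Type*} [AddCommGroup G] {S : Set G}

private lemma cayley_adj_add (c : G) {a b : G} (h : (cayley S).Adj a b) :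
    (cayley S).Adj (a + c) (b + c) := by
  refine (⟨fun he => h.1 (by simpa using he), ?_⟩ : a + c ≠ b + c ∧ _)
  simpa using h.2

private def transHom (S : Set G) (c : G) : cayley S →g cayley S :=
  ⟨fun x => x + c, fun h => cayley_adj_add c h⟩

private lemma reachable_add' (c : G) {a b : G} (h : (cayley S).Reachable a b) :
    (cayley S).Reachable (a + c) (b + c) :=
  h.map ⟨fun x => x + c, fun h => cayley_adj_add c h⟩

private lemma dist_add_le (a b c : G) :
    (cayley S).dist (a + c) (b + c) ≤ (cayley S).dist a b := by
  by_cases h : (cayley S).Reachable a b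
  · obtain ⟨p, hp⟩ := h.exists_walk_length_eq_dist
    calc (cayley S).dist (a + c) (b + c) ≤ (p.map (transHom S c)).length :=
          SimpleGraph.dist_le _
      _ = p.length := p.length_map _
      _ = _ := hp
  · have h' : ¬ (cayley S).Reachable (a + c) (b + c) := fun hr => by
      have := reachable_add' (-c) hr
      simp only [add_neg_cancel_right] at this
      exact h this
    rw [SimpleGraph.dist_eq_zero_of_not_reachable h']
    exact Nat.zero_le _

private lemma dist_add (a b c : G) :
    (cayley S).dist (a + c) (b + c) = (cayley S).dist a b := by
  refine le_antisymm (dist_add_le a b c) ?_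
  have := dist_add_le (S := S) (a + c) (b + c) (-c)
  simpa using this

private lemma reachable_zero (hgen : AddSubgroup.closure S = ⊤) (g : G) :
    (cayley S).Reachable 0 g := by
  have hg : g ∈ AddSubgroup.closure S := hgen ▸ AddSubgroup.mem_top g
  induction hg using AddSubgroup.closure_induction with
  | mem x hx =>
    by_cases hx0 : x = 0
    · rw [hx0]
    · exact (SimpleGraph.Adj.reachable (⟨fun h => hx0 h.symm, Or.inl (by simpa using hx)⟩ :
        (0 : G) ≠ x ∧ (x - 0 ∈ S ∨ 0 - x ∈ S)))
  | zero => rfl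
  | add x y _ _ hx hy =>
    refine hx.trans ?_
    have := reachable_add' x hy
    simpa [add_comm] using this
  | neg x _ hx =>
    have := (reachable_add' (-x) hx).symm
    simpa using this

private lemma cayley_connected (hgen : AddSubgroup.closure S = ⊤) :
    (cayley S).Connected := by
  rw [SimpleGraph.connected_iff]
  exact ⟨fun a b => ((reachable_zero hgen a).symm.trans (reachable_zero hgen b)), ⟨0⟩⟩

private lemma dist_zero_add_le (hgen : AddSubgroup.closure S = ⊤) (a b : G) :
    (cayley S).dist 0 (a + b) ≤ (cayley S).dist 0 a + (cayley S).dist 0 b := by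
  have h := (cayley_connected hgen).dist_triangle (u := (0 : G)) (v := a) (w := a + b)
  have h2 : (cayley S).dist a (a + b) = (cayley S).dist 0 b := by
    have := dist_add (S := S) 0 b a
    rwa [zero_add, add_comm b a] at this
  rwa [h2] at h

private lemma dist_zero_nsmul_le (hgen : AddSubgroup.closure S = ⊤) (g : G) (r : ℕ) :
    (cayley S).dist 0 (r • g) ≤ r * (cayley S).dist 0 g := by
  induction r with
  | zero => simp
  | succ n ih =>
    have h := dist_zero_add_le hgen (n • g) g
    rw [succ_nsmul]
    calc (cayley S).dist 0 (n • g + g) ≤ _ := h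
      _ ≤ n * (cayley S).dist 0 g + (cayley S).dist 0 g := by omega
      _ = (n + 1) * (cayley S).dist 0 g := by ring

private lemma dist_path_le (hgen : AddSubgroup.closure S = ⊤) (δ : ℤ → G)
    (hδ : ∀ n : ℤ, (cayley S).Adj (δ n) (δ (n + 1))) (j : ℤ) (m : ℕ) :
    (cayley S).dist (δ j) (δ (j + m)) ≤ m := by
  induction m with
  | zero => simp
  | succ n ih =>
    have h := (cayley_connected hgen).dist_triangle (u := δ j) (v := δ (j + n))
      (w := δ (j + (n + 1 : ℕ)))
    have step : (cayley S).dist (δ (j + n)) (δ (j + (n + 1 : ℕ))) = 1 := by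
      rw [SimpleGraph.dist_eq_one_iff_adj]
      have := hδ (j + n)
      convert this using 2
      push_cast; ring
    omega

end Aux

section Tors
variable {G : Type*} [AddCommGroup G] [AddGroup.FG G]

private lemma torsion_finite : Finite (AddCommGroup.torsion G) := by
  have h1 : Module.Finite ℤ G := Module.Finite.iff_addGroup_fg.mpr ‹_›
  have h2 : IsNoetherian ℤ G := inferInstance
  have h3 : (AddSubgroup.toIntSubmodule (AddCommGroup.torsion G)).FG :=
    IsNoetherian.noetherian _
  have h4 : Module.Finite ℤ (AddSubgroup.toIntSubmodule (AddCommGroup.torsion G)) :=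
    Module.Finite.iff_fg.mpr h3
  have h5 : AddGroup.FG (AddCommGroup.torsion G) := Module.Finite.iff_addGroup_fg.mp h4
  have htors : AddMonoid.IsTorsion (AddCommGroup.torsion G) := fun g =>
    AddSubmonoid.isOfFinAddOrder_coe.mp g.2
  exact AddCommGroup.finite_of_fg_torsion _ htors

end Tors

section Tele
variable {G : Type*} [AddCommGroup G] {S : Set G}

private lemma qa_tele {t : G ⧸ AddCommGroup.torsion G} {δ : ℤ → G}
    (hδ : ∀ n : ℤ, QuotientAddGroup.mk' (AddCommGroup.torsion G) (δ (n + 1) - δ n) = t)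
    (j k : ℤ) :
    QuotientAddGroup.mk' (AddCommGroup.torsion G) (δ k - δ j) = (k - j) • t := by
  obtain ⟨m, rfl⟩ : ∃ m : ℤ, k = j + m := ⟨k - j, by ring⟩
  rw [add_sub_cancel_left]
  induction m using Int.induction_on with
  | zero => simp
  | succ n ih =>
    have e : j + ((n : ℤ) + 1) = (j + n) + 1 := by ring
    have h1 : δ (j + ((n : ℤ) + 1)) - δ j
        = (δ ((j + n) + 1) - δ (j + n)) + (δ (j + n) - δ j) := by
      rw [e]; abel
    rw [h1, map_add, hδ (j + n), ih, add_zsmul, one_zsmul, add_comm]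
  | pred n ih =>
    have e : j + (-(n : ℤ) - 1) + 1 = j + -(n : ℤ) := by ring
    have h1 : δ (j + (-(n : ℤ) - 1)) - δ j
        = (δ (j + -(n : ℤ)) - δ j) - (δ (j + (-(n : ℤ) - 1) + 1) - δ (j + (-(n : ℤ) - 1))) := by
      rw [e]; abel
    rw [h1, map_sub, ih, hδ _, sub_zsmul, one_zsmul, sub_eq_add_neg]

end Tele

/-- **Parallel lines stay geodesics.** If one quasi-algebraic line in `Cay(G,S)` of
quasi-type `π_G s` is a geodesic line, then every quasi-algebraic line of quasi-type
`π_G s` is a geodesic line. -/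
theorem parallel_lines_geodesic {G : Type*} [AddCommGroup G] [AddGroup.FG G]
    (S : Set G) (hfin : S.Finite) (hsym : ∀ t ∈ S, -t ∈ S)
    (hgen : AddSubgroup.closure S = ⊤) (s : G) (hs : s ∈ S)
    (γ : ℤ → G)
    (hγ : IsQuasiAlgebraicLine S (QuotientAddGroup.mk' (AddCommGroup.torsion G) s) γ)
    (hγgeo : IsGeodesicLine (cayley S) γ)
    (η : ℤ → G)
    (hη : IsQuasiAlgebraicLine S (QuotientAddGroup.mk' (AddCommGroup.torsion G) s) η) :
    IsGeodesicLine (cayley S) η := by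
  classical
  have hfinT : Finite (AddCommGroup.torsion G) := torsion_finite
  obtain ⟨D, hD⟩ : ∃ D : ℕ, ∀ x : G, x ∈ AddCommGroup.torsion G → (cayley S).dist 0 x ≤ D := by
    have hfs : ((AddCommGroup.torsion G : Set G)).Finite := Set.toFinite _
    obtain ⟨D, hD⟩ := (hfs.image ((cayley S).dist 0)).bddAbove
    exact ⟨D, fun x hx => hD (Set.mem_image_of_mem _ hx)⟩
  set t := QuotientAddGroup.mk' (AddCommGroup.torsion G) s with ht
  have key : ∀ (g : G) (n : ℕ),
      QuotientAddGroup.mk' (AddCommGroup.torsion G) g = (n : ℤ) • t →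
      n ≤ (cayley S).dist 0 g := by
    intro g n hg
    by_contra hlt
    push_neg at hlt
    set d := (cayley S).dist 0 g with hd
    have main : ∀ r : ℕ, r * n ≤ r * d + D := by
      intro r
      have hγtele := qa_tele hγ.2 0 ((r * n : ℕ) : ℤ)
      have hrg : QuotientAddGroup.mk' (AddCommGroup.torsion G) (r • g)
          = ((r : ℤ) * n) • t := by
        rw [map_nsmul, hg, ← natCast_zsmul, smul_smul]
      have hτ : QuotientAddGroup.mk' (AddCommGroup.torsion G)
          (γ ((r * n : ℕ) : ℤ) - γ 0 - r • g) = 0 := by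
        rw [map_sub, hγtele, hrg, sub_zero]
        push_cast
        rw [sub_self]
      have hmem : γ ((r * n : ℕ) : ℤ) - γ 0 - r • g ∈ AddCommGroup.torsion G :=
        (QuotientAddGroup.eq_zero_iff _).mp hτ
      have hgeo := hγgeo ((r * n : ℕ) : ℤ) 0
      have h2 := dist_add (S := S) 0 (γ ((r * n : ℕ) : ℤ) - γ 0) (γ 0)
      rw [zero_add, sub_add_cancel] at h2
      have hsplit : γ ((r * n : ℕ) : ℤ) - γ 0
          = r • g + (γ ((r * n : ℕ) : ℤ) - γ 0 - r • g) := by abel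
      have hnat : ((r * n : ℕ) : ℤ).natAbs = r * n := by omega
      calc r * n = (cayley S).dist (γ 0) (γ ((r * n : ℕ) : ℤ)) := by
            rw [SimpleGraph.dist_comm, hgeo, sub_zero, hnat]
        _ = (cayley S).dist 0 (γ ((r * n : ℕ) : ℤ) - γ 0) := h2
        _ = (cayley S).dist 0 (r • g + (γ ((r * n : ℕ) : ℤ) - γ 0 - r • g)) := by
            rw [← hsplit]
        _ ≤ (cayley S).dist 0 (r • g)
              + (cayley S).dist 0 (γ ((r * n : ℕ) : ℤ) - γ 0 - r • g) :=
            dist_zero_add_le hgen _ _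
        _ ≤ r * d + D := add_le_add (dist_zero_nsmul_le hgen g r) (hD _ hmem)
    have hmain := main (D + 1)
    nlinarith
  have half : ∀ j k : ℤ, k ≤ j → (cayley S).dist (η k) (η j) = (j - k).toNat := by
    intro j k hkj
    set m := (j - k).toNat with hm
    have hmj : j = k + (m : ℤ) := by omega
    refine le_antisymm ?_ ?_
    · rw [hmj]; exact dist_path_le hgen η hη.1 k m
    · have hg : QuotientAddGroup.mk' (AddCommGroup.torsion G) (η j - η k) = (m : ℤ) • t := by
        rw [qa_tele hη.2 k j]
        congr 1
        omega
      have hk := key (η j - η k) m hg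
      have h2 := dist_add (S := S) 0 (η j - η k) (η k)
      rw [zero_add, sub_add_cancel] at h2
      rw [h2]
      exact hk
  intro j k
  rcases le_total k j with h | h
  · rw [SimpleGraph.dist_comm, half j k h]; omega
  · rw [half k j h]; omega
end

section
/- Let G be a finitely generated Abelian group, let S ⊆ G be a finite generating set, and let r ∈ ℕ with r > diam_{d_S}(tors G). Then β(r) ≡ |tors G| (mod 2), where β(r) denotes the number of elements of the d_S-ball of radius r around 0 in G. -/
section Aux

lemma cayley_adj {G : Type*} [AddCommGroup G] {S : Set G} {g h : G} :
    (cayley S).Adj g h ↔ g ≠ h ∧ (h - g ∈ S ∨ g - h ∈ S) := Iff.rfl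

/-- Translation by `a` is an automorphism of the Cayley graph. -/
def cayleyTrans {G : Type*} [AddCommGroup G] (S : Set G) (a : G) : cayley S ≃g cayley S where
  toEquiv := Equiv.addRight a
  map_rel_iff' := by
    intro x y
    simp only [cayley_adj, Equiv.coe_addRight, ne_eq, add_left_inj,
      add_sub_add_right_eq_sub]

/-- Negation is an automorphism of the Cayley graph. -/
def cayleyNeg {G : Type*} [AddCommGroup G] (S : Set G) : cayley S ≃g cayley S where
  toEquiv := Equiv.neg G
  map_rel_iff' := by
    intro x y
    simp only [cayley_adj, Equiv.neg_apply, ne_eq, neg_inj, neg_sub_neg]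
    tauto

/-- Graph isomorphisms preserve distances. -/
lemma iso_dist_le {V V' : Type*} {Γ : SimpleGraph V} {Γ' : SimpleGraph V'} (φ : Γ ≃g Γ')
    (u v : V) : Γ'.dist (φ u) (φ v) ≤ Γ.dist u v := by
  by_cases h : Γ.Reachable u v
  · obtain ⟨w, hw⟩ := h.exists_walk_length_eq_dist
    calc Γ'.dist (φ u) (φ v) ≤ (w.map φ.toHom).length := SimpleGraph.dist_le _
      _ = Γ.dist u v := by rw [SimpleGraph.Walk.length_map, hw]
  · rw [SimpleGraph.dist_eq_zero_of_not_reachable h,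
      SimpleGraph.dist_eq_zero_of_not_reachable (fun hr => h (SimpleGraph.Iso.reachable_iff.mp hr))]

lemma iso_dist {V V' : Type*} {Γ : SimpleGraph V} {Γ' : SimpleGraph V'} (φ : Γ ≃g Γ')
    (u v : V) : Γ'.dist (φ u) (φ v) = Γ.dist u v := by
  refine le_antisymm (iso_dist_le φ u v) ?_
  have := iso_dist_le φ.symm (φ u) (φ v)
  simpa using this

lemma cayley_reachable {G : Type*} [AddCommGroup G] {S : Set G}
    (hgen : AddSubgroup.closure S = ⊤) (g : G) : (cayley S).Reachable 0 g := by
  let H : AddSubgroup G :=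
    { carrier := {g | (cayley S).Reachable 0 g}
      zero_mem' := SimpleGraph.Reachable.refl 0
      add_mem' := by
        intro a b ha hb
        have h2 := hb.map (cayleyTrans S a).toHom
        have e1 : (cayleyTrans S a).toHom (0 : G) = a := by
          simp [cayleyTrans]
        have e2 : (cayleyTrans S a).toHom b = a + b := by
          simp [cayleyTrans, add_comm]
        rw [e1, e2] at h2
        exact ha.trans h2
      neg_mem' := by
        intro a ha
        have h2 := ha.map (cayleyNeg S).toHom
        have e1 : (cayleyNeg S).toHom (0 : G) = 0 := by simp [cayleyNeg]
        have e2 : (cayleyNeg S).toHom a = -a := rfl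
        rw [e1, e2] at h2
        exact h2 }
  have hS : S ⊆ (H : Set G) := by
    intro s hs
    by_cases h0 : s = 0
    · subst h0; exact SimpleGraph.Reachable.refl 0
    · exact SimpleGraph.Adj.reachable ⟨fun h => h0 h.symm, Or.inl (by simpa)⟩
  have : AddSubgroup.closure S ≤ H := (AddSubgroup.closure_le H).mpr hS
  rw [hgen] at this
  exact this (AddSubgroup.mem_top g)

lemma walk_sum {G : Type*} [AddCommGroup G] {S : Set G} {a b : G}
    (w : (cayley S).Walk a b) :
    ∃ l : List G, (∀ x ∈ l, x ∈ S ∪ -S) ∧ l.length = w.length ∧ l.sum = b - a := by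
  induction w with
  | nil => exact ⟨[], by simp⟩
  | @cons a c b h p ih =>
    obtain ⟨l, hl, hlen, hsum⟩ := ih
    refine ⟨(c - a) :: l, ?_, by simp [hlen], ?_⟩
    · intro x hx
      rcases List.mem_cons.mp hx with rfl | hx
      · rcases h.2 with h2 | h2
        · exact Set.mem_union_left _ h2
        · exact Set.mem_union_right _ (by rw [Set.mem_neg, neg_sub]; exact h2)
      · exact hl x hx
    · rw [List.sum_cons, hsum]; abel

lemma ball_finite {G : Type*} [AddCommGroup G] {S : Set G} (hfin : S.Finite)
    (hgen : AddSubgroup.closure S = ⊤) (r : ℕ) :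
    {g : G | (cayley S).dist 0 g ≤ r}.Finite := by
  have hT : (S ∪ -S).Finite := hfin.union hfin.neg
  haveI := hT.to_subtype
  have hL : {l : List ↥(S ∪ -S) | l.length ≤ r}.Finite := List.finite_length_le _ r
  apply (hL.image (fun l => (l.map Subtype.val).sum)).subset
  intro g hg
  obtain ⟨w, hw⟩ := (cayley_reachable hgen g).exists_walk_length_eq_dist
  obtain ⟨l, hl, hlen, hsum⟩ := walk_sum w
  refine ⟨l.attach.map fun x => ⟨x.1, hl x.1 x.2⟩, ?_, ?_⟩
  · simp only [Set.mem_setOf_eq, List.length_map, List.length_attach]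
    rw [hlen, hw]
    exact hg
  · show (List.map Subtype.val (l.attach.map fun x => (⟨x.1, hl x.1 x.2⟩ : ↥(S ∪ -S)))).sum = g
    rw [List.map_map]
    simp [Function.comp_def, hsum]

lemma even_card_aux {α : Type*} [DecidableEq α] (f : α → α) :
    ∀ (n : ℕ) (A : Finset α), A.card = n → (∀ x ∈ A, f x ∈ A) → (∀ x ∈ A, f (f x) = x) →
      (∀ x ∈ A, f x ≠ x) → Even A.card := by
  intro n
  induction n using Nat.strong_induction_on with
  | _ n ih =>
    intro A hcard hmem hinv hne
    rcases A.eq_empty_or_nonempty with rfl | ⟨x, hx⟩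
    · simp
    · have hfx : f x ∈ A := hmem x hx
      have hxx : f x ≠ x := hne x hx
      have hsub : {x, f x} ⊆ A := by
        intro y hy
        rcases Finset.mem_insert.mp hy with rfl | hy
        · exact hx
        · rw [Finset.mem_singleton.mp hy]; exact hfx
      have hcard2 : ({x, f x} : Finset α).card = 2 := Finset.card_pair (Ne.symm hxx)
      have hle : 2 ≤ A.card := hcard2 ▸ Finset.card_le_card hsub
      have hmem' : ∀ y ∈ A \ {x, f x}, f y ∈ A \ {x, f x} := by
        intro y hy
        rw [Finset.mem_sdiff] at hy ⊢
        obtain ⟨hyA, hynot⟩ := hy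
        simp only [Finset.mem_insert, Finset.mem_singleton] at hynot ⊢
        push_neg at hynot ⊢
        refine ⟨hmem y hyA, ?_, ?_⟩
        · intro hfy; exact hynot.2 (by rw [← hinv y hyA, hfy])
        · intro hfy; exact hynot.1 (by rw [← hinv y hyA, hfy, hinv x hx])
      have hcards : A.card = (A \ {x, f x}).card + 2 := by
        rw [Finset.card_sdiff_of_subset hsub, hcard2]
        omega
      have heven : Even (A \ {x, f x}).card := by
        refine ih (A \ {x, f x}).card ?_ _ rfl hmem'
          (fun y hy => hinv y (Finset.mem_sdiff.mp hy).1)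
          (fun y hy => hne y (Finset.mem_sdiff.mp hy).1)
        omega
      rw [hcards]
      exact heven.add even_two

end Aux

/-- **Parity of the torsion part via size of balls.** If `G` is a finitely generated
Abelian group with finite generating set `S` and `r ∈ ℕ` exceeds the `d_S`-diameter of
`tors G`, then the number of elements of the `d_S`-ball of radius `r` around `0` is
congruent to `|tors G|` modulo 2. -/
theorem ball_card_parity {G : Type*} [AddCommGroup G] [AddGroup.FG G] (S : Set G)
    (hfin : S.Finite) (hgen : AddSubgroup.closure S = ⊤) (r : ℕ)
    (hr : ∀ x ∈ AddCommGroup.torsion G, ∀ y ∈ AddCommGroup.torsion G,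
      (cayley S).dist x y < r) :
    Nat.card {g : G | (cayley S).dist 0 g ≤ r} % 2 =
      Nat.card (AddCommGroup.torsion G) % 2 := by
  classical
  have hball : {g : G | (cayley S).dist 0 g ≤ r}.Finite := ball_finite hfin hgen r
  have htors_sub : ((AddCommGroup.torsion G : AddSubgroup G) : Set G) ⊆
      {g : G | (cayley S).dist 0 g ≤ r} := by
    intro x hx
    exact le_of_lt (hr 0 (zero_mem _) x hx)
  have htorsfin : ((AddCommGroup.torsion G : AddSubgroup G) : Set G).Finite :=
    hball.subset htors_sub
  set B := hball.toFinset with hB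
  set T := htorsfin.toFinset with hT
  have hTB : T ⊆ B := by
    intro x hx
    rw [hT, Set.Finite.mem_toFinset] at hx
    rw [hB, Set.Finite.mem_toFinset]
    exact htors_sub hx
  have hnegdist : ∀ g : G, (cayley S).dist 0 (-g) = (cayley S).dist 0 g := by
    intro g
    have := iso_dist (cayleyNeg S) 0 g
    have e1 : ((cayleyNeg S) (0 : G)) = 0 := by simp [cayleyNeg]
    have e2 : ((cayleyNeg S) g) = -g := rfl
    rw [e1, e2] at this
    exact this
  have heven : Even (B \ T).card := by
    refine even_card_aux (fun g => -g) (B \ T).card _ rfl ?_ (fun x _ => neg_neg x) ?_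
    · intro x hx
      rw [Finset.mem_sdiff] at hx ⊢
      obtain ⟨hxB, hxT⟩ := hx
      rw [hB, Set.Finite.mem_toFinset] at hxB
      rw [hT, Set.Finite.mem_toFinset] at hxT
      refine ⟨?_, ?_⟩
      · rw [hB, Set.Finite.mem_toFinset]
        show (cayley S).dist 0 (-x) ≤ r
        rw [hnegdist]
        exact hxB
      · rw [hT, Set.Finite.mem_toFinset]
        intro h
        exact hxT (by simpa using neg_mem h)
    · intro x hx
      rw [Finset.mem_sdiff] at hx
      obtain ⟨_, hxT⟩ := hx
      intro hneg0
      have hneg : -x = x := hneg0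
      apply hxT
      rw [hT, Set.Finite.mem_toFinset]
      show x ∈ AddCommGroup.torsion G
      rw [AddCommGroup.mem_torsion]
      rw [isOfFinAddOrder_iff_nsmul_eq_zero]
      refine ⟨2, by norm_num, ?_⟩
      have : x + x = -x + x := by rw [hneg]
      rw [two_nsmul, this, neg_add_cancel]
  have hcards : B.card = (B \ T).card + T.card := (Finset.card_sdiff_add_card_eq_card hTB).symm
  have h1 : Nat.card {g : G | (cayley S).dist 0 g ≤ r} = B.card := by
    rw [Nat.card_coe_set_eq, Set.ncard_eq_toFinset_card _ hball]
  have h2 : Nat.card (AddCommGroup.torsion G) = T.card := by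
    rw [show Nat.card (AddCommGroup.torsion G)
        = Nat.card ((AddCommGroup.torsion G : AddSubgroup G) : Set G) from rfl,
      Nat.card_coe_set_eq, Set.ncard_eq_toFinset_card _ htorsfin]
  rw [h1, h2, hcards]
  obtain ⟨k, hk⟩ := heven
  omega
end
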